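/- Pointwise decay of the weighted Cauchy transform quotient: under the estimates |T̄_{z₀,λ}v(z)| ≤ min( τ₂ |λ|^{−1/2} ‖v‖, τ₃ log(3|λ|)|λ|^{−1}|z−z₀|^{−2}(1+|z−z₀|) ‖v‖ ) for v with ‖v‖_{C¹_{z̄}(D̄)} ≤ N₁, one has for every bounded D and |λ| ≥ 1: |∫_D u(z) T̄_{z₀,λ}v(z)/(z̄−z̄₀) dRe z dIm z| ≤ σ₃(D,n) ‖u‖_{C(D̄)} ‖v‖_{C¹_{z̄}(D̄)} log(3|λ|) |λ|^{−3/4}. -/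

import Mathlib

open MeasureTheory Complex

noncomputable section

/-- `n × n` complex matrices with the entrywise max (sup-sup) norm. -/
abbrev Mat (n : ℕ) := Fin n → Fin n → ℂ

/-- Matrix multiplication. -/
def matMul {n : ℕ} (A B : Mat n) : Mat n := fun i j => ∑ k, A i k * B k j

/-- Matrix transpose. -/
def transp {n : ℕ} (A : Mat n) : Mat n := fun i j => A j i

/-- Identity matrix. -/
def matId (n : ℕ) : Mat n := fun i j => if i = j then 1 else 0

/-- Wirtinger derivative `∂/∂z̄`. -/
def dzbar {E : Type*} [NormedAddCommGroup E] [NormedSpace ℂ E] (f : ℂ → E) (z : ℂ) : E :=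
  (2⁻¹ : ℂ) • (fderiv ℝ f z 1 + Complex.I • fderiv ℝ f z Complex.I)

/-- Wirtinger derivative `∂/∂z`. -/
def dz {E : Type*} [NormedAddCommGroup E] [NormedSpace ℂ E] (f : ℂ → E) (z : ℂ) : E :=
  (2⁻¹ : ℂ) • (fderiv ℝ f z 1 - Complex.I • fderiv ℝ f z Complex.I)

/-- Componentwise Laplacian `Δ = ∂²/∂x₁² + ∂²/∂x₂²` on `ℂ ≅ ℝ²`. -/
def lap {E : Type*} [NormedAddCommGroup E] [NormedSpace ℝ E] (f : ℂ → E) (z : ℂ) : E :=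
  fderiv ℝ (fun w => fderiv ℝ f w 1) z 1 +
    fderiv ℝ (fun w => fderiv ℝ f w Complex.I) z Complex.I

/-- Sup norm over the closure of `D`. -/
def supN {n : ℕ} (D : Set ℂ) (u : ℂ → Mat n) : ℝ := ⨆ z : closure D, ‖u (z : ℂ)‖

/-- `C¹_z̄(D̄)` norm: max of the sup norms of `u` and `∂u/∂z̄`. -/
def spaceNorm {n : ℕ} (D : Set ℂ) (u : ℂ → Mat n) : ℝ := max (supN D u) (supN D (dzbar u))

/-- The oscillatory exponential weight `e^{λ(z−z₀)² − λ̄(z̄−z̄₀)²}`. -/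
def phase (z₀ lam z : ℂ) : ℂ :=
  Complex.exp (lam * (z - z₀) ^ 2 - (starRingEnd ℂ) lam * ((starRingEnd ℂ) (z - z₀)) ^ 2)

/-- The Bukhgeim-type Green function `g_{z₀}(z,ζ,λ)`. -/
def gker (D : Set ℂ) (z₀ : ℂ) (lam : ℂ) (z ζ : ℂ) : ℂ :=
  Complex.exp (lam * (ζ - z₀) ^ 2 - (starRingEnd ℂ) lam * ((starRingEnd ℂ) (ζ - z₀)) ^ 2) /
      (4 * (Real.pi : ℂ) ^ 2) *
    ∫ η in D,
      Complex.exp (-lam * (η - z₀) ^ 2 + (starRingEnd ℂ) lam * ((starRingEnd ℂ) (η - z₀)) ^ 2) /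
        ((z - η) * ((starRingEnd ℂ) η - (starRingEnd ℂ) ζ))

/-- The Bukhgeim Green operator `g_{z₀,λ} u`. -/
def gOp {n : ℕ} (D : Set ℂ) (z₀ lam : ℂ) (u : ℂ → Mat n) (z : ℂ) : Mat n :=
  ∫ ζ in D, gker D z₀ lam z ζ • u ζ

/-- The weighted Cauchy transform `T̄_{z₀,λ}`. -/
def Tbar {n : ℕ} (D : Set ℂ) (z₀ lam : ℂ) (u : ℂ → Mat n) (z : ℂ) : Mat n :=
  (Real.pi : ℂ)⁻¹ •
    ∫ ζ in D,
      (Complex.exp (lam * (ζ - z₀) ^ 2 - (starRingEnd ℂ) lam * ((starRingEnd ℂ) (ζ - z₀)) ^ 2) /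
        ((starRingEnd ℂ) z - (starRingEnd ℂ) ζ)) • u ζ


open Metric
open scoped ENNReal NNReal
lemma lintegral_inv_ball (z₀ : ℂ) {δ : ℝ} (hδ : 0 < δ) :
    ∫⁻ z in Metric.ball z₀ δ, ENNReal.ofReal ‖z - z₀‖⁻¹ ≤ ENNReal.ofReal (4 * Real.pi * δ) := by
  set f : ℂ → ℝ≥0∞ := fun z => ENNReal.ofReal ‖z - z₀‖⁻¹ with hf
  set A : ℕ → Set ℂ := fun k => {z | δ / 2 ^ (k + 1) ≤ ‖z - z₀‖} ∩ Metric.ball z₀ (δ / 2 ^ k)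
    with hA
  have hcover : Metric.ball z₀ δ ≤ᵐ[volume] ⋃ k, A k := by
    refine ae_iff.2 ?_
    refine measure_mono_null ?_ (measure_singleton z₀)
    intro z hz
    have hzball : z ∈ Metric.ball z₀ δ := by
      by_contra hb
      exact hz (fun h => absurd h hb)
    have hznot : z ∉ ⋃ k, A k := fun hm => hz (fun _ => hm)
    by_contra hne
    have hr : 0 < ‖z - z₀‖ := by
      simp only [norm_pos_iff, sub_ne_zero]
      exact fun h => hne (by simpa using h)
    have hrδ : ‖z - z₀‖ < δ := by simpa [dist_eq_norm] using hzball
    have hex : ∃ k : ℕ, δ / 2 ^ (k + 1) ≤ ‖z - z₀‖ := by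
      obtain ⟨k, hk⟩ := pow_unbounded_of_one_lt (δ / ‖z - z₀‖) (by norm_num : (1:ℝ) < 2)
      refine ⟨k, ?_⟩
      rw [div_le_iff₀ (by positivity : (0:ℝ) < 2 ^ (k+1))]
      rw [div_lt_iff₀ hr] at hk
      nlinarith [pow_pos (show (0:ℝ) < 2 by norm_num) k, hr, pow_succ (2:ℝ) k]
    classical
    set k := Nat.find hex with hkdef
    have h1 : δ / 2 ^ (k + 1) ≤ ‖z - z₀‖ := Nat.find_spec hex
    have h2 : ‖z - z₀‖ < δ / 2 ^ k := by
      rcases Nat.eq_zero_or_pos k with h0 | hpos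
      · simpa [h0] using hrδ
      · have hmin := not_le.mp (Nat.find_min hex (m := k - 1) (by omega))
        have heq : δ / 2 ^ k = δ / 2 ^ (k - 1 + 1) := by rw [Nat.sub_add_cancel hpos]
        rw [heq]; exact hmin
    exact hznot (Set.mem_iUnion.2 ⟨k, ⟨h1, by simpa [dist_eq_norm] using h2⟩⟩)
  calc ∫⁻ z in Metric.ball z₀ δ, f z ≤ ∫⁻ z in ⋃ k, A k, f z := lintegral_mono_set' hcover
    _ ≤ ∑' k, ∫⁻ z in A k, f z := lintegral_iUnion_le _ _
    _ ≤ ∑' k : ℕ, ENNReal.ofReal (2 * δ) * (NNReal.pi : ℝ≥0∞) * ENNReal.ofReal ((2:ℝ)⁻¹) ^ k := by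
        apply ENNReal.tsum_le_tsum
        intro k
        have hb : ∫⁻ z in A k, f z ≤ ENNReal.ofReal (2 ^ (k+1) / δ) * volume (A k) := by
          rw [← setLIntegral_const]
          apply setLIntegral_mono' (by
            exact (isClosed_le continuous_const (by fun_prop)).measurableSet.inter
              measurableSet_ball)
          intro z hz
          apply ENNReal.ofReal_le_ofReal
          rw [inv_le_comm₀ (lt_of_lt_of_le (by positivity) hz.1) (by positivity)]
          calc (2 ^ (k+1) / δ)⁻¹ = δ / 2 ^ (k+1) := by field_simp
            _ ≤ ‖z - z₀‖ := hz.1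
        refine hb.trans ?_
        have hvol : volume (A k) ≤ ENNReal.ofReal ((δ / 2 ^ k) ^ 2) * (NNReal.pi : ℝ≥0∞) := by
          calc volume (A k) ≤ volume (Metric.ball z₀ (δ / 2 ^ k)) :=
                measure_mono Set.inter_subset_right
            _ = ENNReal.ofReal (δ / 2 ^ k) ^ 2 * (NNReal.pi : ℝ≥0∞) := Complex.volume_ball _ _
            _ = ENNReal.ofReal ((δ / 2 ^ k) ^ 2) * _ := by
                rw [ENNReal.ofReal_pow (by positivity)]
        calc ENNReal.ofReal (2 ^ (k+1) / δ) * volume (A k)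
            ≤ ENNReal.ofReal (2 ^ (k+1) / δ) * (ENNReal.ofReal ((δ / 2 ^ k) ^ 2) *
              (NNReal.pi : ℝ≥0∞)) := by gcongr
          _ = ENNReal.ofReal (2 ^ (k+1) / δ * (δ / 2 ^ k) ^ 2) * (NNReal.pi : ℝ≥0∞) := by
              rw [← mul_assoc, ← ENNReal.ofReal_mul (by positivity)]
          _ = ENNReal.ofReal (2 * δ * (2:ℝ)⁻¹ ^ k) * (NNReal.pi : ℝ≥0∞) := by
              congr 2
              have h2k : (2:ℝ) ^ k ≠ 0 := by positivity
              rw [inv_pow]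
              field_simp
              ring
          _ = ENNReal.ofReal (2 * δ) * (NNReal.pi : ℝ≥0∞) * ENNReal.ofReal ((2:ℝ)⁻¹) ^ k := by
              rw [ENNReal.ofReal_mul (by positivity), ← ENNReal.ofReal_pow (by positivity)]
              ring
    _ = ENNReal.ofReal (2 * δ) * (NNReal.pi : ℝ≥0∞) * (1 - ENNReal.ofReal ((2:ℝ)⁻¹))⁻¹ := by
        rw [ENNReal.tsum_mul_left, ENNReal.tsum_geometric]
    _ = ENNReal.ofReal (4 * Real.pi * δ) := by
        have h2 : (1 - ENNReal.ofReal ((2:ℝ)⁻¹))⁻¹ = ENNReal.ofReal 2 := by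
          rw [show ENNReal.ofReal ((2:ℝ)⁻¹) = 2⁻¹ by
              simp [ENNReal.ofReal_inv_of_pos, ENNReal.ofReal_ofNat],
            ENNReal.one_sub_inv_two, inv_inv, ENNReal.ofReal_ofNat]
        have hπ : (NNReal.pi : ℝ≥0∞) = ENNReal.ofReal Real.pi := by
          rw [← NNReal.coe_real_pi, ENNReal.ofReal_coe_nnreal]
        rw [h2, hπ, ← ENNReal.ofReal_mul (by positivity), ← ENNReal.ofReal_mul (by positivity)]
        congr 1
        ring

/-- Far-field annuli bound: `∫_{|z-z₀|≥δ} |z-z₀|⁻³ ≤ 8π/δ`. -/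
lemma lintegral_inv_cube_compl (z₀ : ℂ) {δ : ℝ} (hδ : 0 < δ) :
    ∫⁻ z in {z : ℂ | δ ≤ ‖z - z₀‖}, ENNReal.ofReal (‖z - z₀‖⁻¹ ^ 3) ≤
      ENNReal.ofReal (8 * Real.pi / δ) := by
  set f : ℂ → ℝ≥0∞ := fun z => ENNReal.ofReal (‖z - z₀‖⁻¹ ^ 3) with hf
  set A : ℕ → Set ℂ := fun k => {z | δ * 2 ^ k ≤ ‖z - z₀‖} ∩ Metric.ball z₀ (δ * 2 ^ (k + 1))
    with hA
  have hcover : {z : ℂ | δ ≤ ‖z - z₀‖} ⊆ ⋃ k, A k := by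
    intro z hz
    simp only [Set.mem_setOf_eq] at hz
    have hr : 0 < ‖z - z₀‖ := lt_of_lt_of_le hδ hz
    have hex : ∃ k : ℕ, ‖z - z₀‖ < δ * 2 ^ (k + 1) := by
      obtain ⟨k, hk⟩ := pow_unbounded_of_one_lt (‖z - z₀‖ / δ) (by norm_num : (1:ℝ) < 2)
      refine ⟨k, ?_⟩
      rw [div_lt_iff₀ hδ] at hk
      nlinarith [pow_pos (show (0:ℝ) < 2 by norm_num) k, pow_succ (2:ℝ) k]
    classical
    set k := Nat.find hex with hkdef
    have h2 : ‖z - z₀‖ < δ * 2 ^ (k + 1) := Nat.find_spec hex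
    have h1 : δ * 2 ^ k ≤ ‖z - z₀‖ := by
      rcases Nat.eq_zero_or_pos k with h0 | hpos
      · simpa [h0] using hz
      · have hmin := not_lt.mp (Nat.find_min hex (m := k - 1) (by omega))
        have heq : δ * 2 ^ k = δ * 2 ^ (k - 1 + 1) := by rw [Nat.sub_add_cancel hpos]
        rw [heq]; exact hmin
    exact Set.mem_iUnion.2 ⟨k, ⟨h1, by simpa [dist_eq_norm] using h2⟩⟩
  calc ∫⁻ z in {z : ℂ | δ ≤ ‖z - z₀‖}, f z ≤ ∫⁻ z in ⋃ k, A k, f z := lintegral_mono_set hcover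
    _ ≤ ∑' k, ∫⁻ z in A k, f z := lintegral_iUnion_le _ _
    _ ≤ ∑' k : ℕ, ENNReal.ofReal (4 / δ) * (NNReal.pi : ℝ≥0∞) * ENNReal.ofReal ((2:ℝ)⁻¹) ^ k := by
        apply ENNReal.tsum_le_tsum
        intro k
        have hδk : (0:ℝ) < δ * 2 ^ k := by positivity
        have hb : ∫⁻ z in A k, f z ≤ ENNReal.ofReal ((δ * 2 ^ k)⁻¹ ^ 3) * volume (A k) := by
          rw [← setLIntegral_const]
          apply setLIntegral_mono' (by
            exact (isClosed_le continuous_const (by fun_prop)).measurableSet.inter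
              measurableSet_ball)
          intro z hz
          apply ENNReal.ofReal_le_ofReal
          have h1 : (0:ℝ) < ‖z - z₀‖ := lt_of_lt_of_le hδk hz.1
          gcongr
          exact hz.1
        refine hb.trans ?_
        have hvol : volume (A k) ≤ ENNReal.ofReal ((δ * 2 ^ (k+1)) ^ 2) * (NNReal.pi : ℝ≥0∞) := by
          calc volume (A k) ≤ volume (Metric.ball z₀ (δ * 2 ^ (k+1))) :=
                measure_mono Set.inter_subset_right
            _ = ENNReal.ofReal (δ * 2 ^ (k+1)) ^ 2 * (NNReal.pi : ℝ≥0∞) := Complex.volume_ball _ _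
            _ = ENNReal.ofReal ((δ * 2 ^ (k+1)) ^ 2) * _ := by
                rw [ENNReal.ofReal_pow (by positivity)]
        calc ENNReal.ofReal ((δ * 2 ^ k)⁻¹ ^ 3) * volume (A k)
            ≤ ENNReal.ofReal ((δ * 2 ^ k)⁻¹ ^ 3) * (ENNReal.ofReal ((δ * 2 ^ (k+1)) ^ 2) *
              (NNReal.pi : ℝ≥0∞)) := by gcongr
          _ = ENNReal.ofReal ((δ * 2 ^ k)⁻¹ ^ 3 * (δ * 2 ^ (k+1)) ^ 2) * (NNReal.pi : ℝ≥0∞) := by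
              rw [← mul_assoc, ← ENNReal.ofReal_mul (by positivity)]
          _ = ENNReal.ofReal (4 / δ * (2:ℝ)⁻¹ ^ k) * (NNReal.pi : ℝ≥0∞) := by
              congr 2
              have h2k : (2:ℝ) ^ k ≠ 0 := by positivity
              have hδ' : δ ≠ 0 := ne_of_gt hδ
              rw [inv_pow (2:ℝ) k]
              field_simp
              ring
          _ = ENNReal.ofReal (4 / δ) * (NNReal.pi : ℝ≥0∞) * ENNReal.ofReal ((2:ℝ)⁻¹) ^ k := by
              rw [ENNReal.ofReal_mul (by positivity), ← ENNReal.ofReal_pow (by positivity)]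
              ring
    _ = ENNReal.ofReal (4 / δ) * (NNReal.pi : ℝ≥0∞) * (1 - ENNReal.ofReal ((2:ℝ)⁻¹))⁻¹ := by
        rw [ENNReal.tsum_mul_left, ENNReal.tsum_geometric]
    _ = ENNReal.ofReal (8 * Real.pi / δ) := by
        have h2 : (1 - ENNReal.ofReal ((2:ℝ)⁻¹))⁻¹ = ENNReal.ofReal 2 := by
          rw [show ENNReal.ofReal ((2:ℝ)⁻¹) = 2⁻¹ by
              simp [ENNReal.ofReal_inv_of_pos, ENNReal.ofReal_ofNat],
            ENNReal.one_sub_inv_two, inv_inv, ENNReal.ofReal_ofNat]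
        have hπ : (NNReal.pi : ℝ≥0∞) = ENNReal.ofReal Real.pi := by
          rw [← NNReal.coe_real_pi, ENNReal.ofReal_coe_nnreal]
        rw [h2, hπ, ← ENNReal.ofReal_mul (by positivity), ← ENNReal.ofReal_mul (by positivity)]
        congr 1
        field_simp
        ring


lemma norm_matMul_le' {n : ℕ} (A B : Mat n) : ‖matMul A B‖ ≤ ((n:ℝ)+1) * ‖A‖ * ‖B‖ := by
  have h0 : (0:ℝ) ≤ ((n:ℝ)+1) * ‖A‖ * ‖B‖ := by positivity
  rw [pi_norm_le_iff_of_nonneg h0]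
  intro i
  rw [pi_norm_le_iff_of_nonneg h0]
  intro j
  calc ‖matMul A B i j‖ ≤ ∑ k, ‖A i k * B k j‖ := norm_sum_le _ _
    _ ≤ ∑ _k : Fin n, ‖A‖ * ‖B‖ := by
        apply Finset.sum_le_sum
        intro k _
        rw [norm_mul]
        exact mul_le_mul ((norm_le_pi_norm (A i) k).trans (norm_le_pi_norm A i))
          ((norm_le_pi_norm (B k) j).trans (norm_le_pi_norm B k)) (norm_nonneg _) (norm_nonneg _)
    _ = (n:ℝ) * ‖A‖ * ‖B‖ := by
        rw [Finset.sum_const, Finset.card_univ, Fintype.card_fin, nsmul_eq_mul]; ring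
    _ ≤ ((n:ℝ)+1) * ‖A‖ * ‖B‖ := by
        have : (0:ℝ) ≤ ‖A‖ * ‖B‖ := by positivity
        nlinarith

lemma supN_nonneg {n : ℕ} (D : Set ℂ) (u : ℂ → Mat n) : 0 ≤ supN D u :=
  Real.iSup_nonneg (fun _ => norm_nonneg _)

lemma spaceNorm_nonneg {n : ℕ} (D : Set ℂ) (u : ℂ → Mat n) : 0 ≤ spaceNorm D u :=
  le_trans (supN_nonneg D u) (le_max_left _ _)

lemma norm_le_supN {n : ℕ} {D : Set ℂ} (hb : Bornology.IsBounded D) {u : ℂ → Mat n}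
    (hu : ContinuousOn u (closure D)) {z : ℂ} (hz : z ∈ closure D) : ‖u z‖ ≤ supN D u := by
  obtain ⟨C, hC⟩ := (hb.isCompact_closure).exists_bound_of_continuousOn hu
  exact le_ciSup (f := fun z : closure D => ‖u (z:ℂ)‖)
    ⟨C, by rintro x ⟨⟨w, hw⟩, rfl⟩; exact hC w hw⟩ ⟨z, hz⟩


set_option maxHeartbeats 2000000 in
/-- pointwise decay of the weighted Cauchy transform quotient. -/
theorem Tbar_quotient_estimate (n : ℕ) (D : Set ℂ) (hD : IsOpen D)
    (hb : Bornology.IsBounded D) (τ₂ τ₃ N₁ : ℝ) (hτ₂ : 0 < τ₂) (hτ₃ : 0 < τ₃)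
    (hN₁ : 0 < N₁) :
    ∃ σ₃ : ℝ, 0 < σ₃ ∧
      ∀ (u v : ℂ → Mat n) (z₀ : ℂ) (lam : ℂ), z₀ ∈ D → 1 ≤ ‖lam‖ →
        ContinuousOn u (closure D) →
        ContinuousOn v (closure D) → ContinuousOn (dzbar v) (closure D) →
        spaceNorm D v ≤ N₁ →
        (∀ z ∈ closure D, z ≠ z₀ →
          ‖Tbar D z₀ lam v z‖ ≤
            min (τ₂ * (Real.sqrt ‖lam‖)⁻¹ * spaceNorm D v)
              (τ₃ * (Real.log (3 * ‖lam‖) / ‖lam‖) * ((1 + ‖z - z₀‖) / ‖z - z₀‖ ^ 2) *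
                spaceNorm D v)) →
        ‖∫ z in D, (((starRingEnd ℂ) z - (starRingEnd ℂ) z₀)⁻¹ : ℂ) •
            matMul (u z) (Tbar D z₀ lam v z)‖ ≤
          σ₃ * supN D u * spaceNorm D v * Real.log (3 * ‖lam‖) / ‖lam‖ ^ ((3 : ℝ) / 4) := by
  classical
  set R : ℝ := Metric.diam (closure D) with hRdef
  have hR0 : 0 ≤ R := Metric.diam_nonneg
  have hπ0 : (0:ℝ) < Real.pi := Real.pi_pos
  refine ⟨((n:ℝ)+1) * (4 * Real.pi * τ₂ + 8 * Real.pi * (1+R) * τ₃) + 1, by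
    have h1 : 0 ≤ 4 * Real.pi * τ₂ := by positivity
    have h2 : 0 ≤ 8 * Real.pi * (1+R) * τ₃ := by
      nlinarith [mul_pos hπ0 hτ₃, mul_nonneg hR0 (mul_pos hπ0 hτ₃).le]
    have h3 : (0:ℝ) ≤ (n:ℝ)+1 := by positivity
    nlinarith [mul_nonneg h3 (add_nonneg h1 h2)], ?_⟩
  intro u v z₀ lam hz₀ hlam hu hv hdv hNv hTv
  set σ₃ : ℝ := ((n:ℝ)+1) * (4 * Real.pi * τ₂ + 8 * Real.pi * (1+R) * τ₃) + 1 with hσdef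
  have hL0 : (0:ℝ) < ‖lam‖ := lt_of_lt_of_le one_pos hlam
  set Λ : ℝ := Real.log (3 * ‖lam‖) with hΛdef
  have hΛ1 : 1 ≤ Λ := by
    rw [hΛdef, Real.le_log_iff_exp_le (by positivity)]
    nlinarith [Real.exp_one_lt_d9]
  set δ : ℝ := ‖lam‖ ^ (-(1/4) : ℝ) with hδdef
  have hδ0 : 0 < δ := Real.rpow_pos_of_pos hL0 _
  set X : ℝ := (‖lam‖ ^ ((3:ℝ)/4))⁻¹ with hXdef
  have hX0 : 0 < X := by
    rw [hXdef]
    exact inv_pos.2 (Real.rpow_pos_of_pos hL0 _)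
  have hsq : (Real.sqrt ‖lam‖)⁻¹ * δ = X := by
    rw [hδdef, hXdef, Real.sqrt_eq_rpow, ← Real.rpow_neg hL0.le, ← Real.rpow_neg hL0.le,
      ← Real.rpow_add hL0]
    norm_num
  have hLδ : ‖lam‖⁻¹ * δ⁻¹ = X := by
    rw [hδdef, hXdef, ← Real.rpow_neg_one ‖lam‖, ← Real.rpow_neg hL0.le,
      ← Real.rpow_neg hL0.le, ← Real.rpow_add hL0]
    norm_num
  set Nu : ℝ := supN D u with hNudef
  set Nv : ℝ := spaceNorm D v with hNvdef
  have hNu0 : 0 ≤ Nu := supN_nonneg D u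
  have hNv0 : 0 ≤ Nv := spaceNorm_nonneg D v
  set F : ℂ → Mat n := fun z => (((starRingEnd ℂ) z - (starRingEnd ℂ) z₀)⁻¹ : ℂ) •
    matMul (u z) (Tbar D z₀ lam v z) with hFdef
  set M₁ : ℝ := τ₂ * (Real.sqrt ‖lam‖)⁻¹ * Nv with hM₁def
  set M₂ : ℂ → ℝ := fun z => τ₃ * (Λ / ‖lam‖) * ((1 + ‖z - z₀‖) / ‖z - z₀‖ ^ 2) * Nv
    with hM₂def
  have hM₁0 : 0 ≤ M₁ := by
    rw [hM₁def]
    have := Real.sqrt_nonneg ‖lam‖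
    positivity
  -- pointwise bound
  have hpt : ∀ z ∈ closure D, z ≠ z₀ →
      ‖F z‖ ≤ ((n:ℝ)+1) * Nu * min M₁ (M₂ z) * ‖z - z₀‖⁻¹ := by
    intro z hz hne
    have h1 : ‖F z‖ = ‖(((starRingEnd ℂ) z - (starRingEnd ℂ) z₀)⁻¹ : ℂ)‖ *
        ‖matMul (u z) (Tbar D z₀ lam v z)‖ := norm_smul _ _
    have h2 : ‖(((starRingEnd ℂ) z - (starRingEnd ℂ) z₀)⁻¹ : ℂ)‖ = ‖z - z₀‖⁻¹ := by
      rw [norm_inv, show (starRingEnd ℂ) z - (starRingEnd ℂ) z₀ = (starRingEnd ℂ) (z - z₀)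
        from (map_sub _ _ _).symm, RCLike.norm_conj]
    have h3 : ‖matMul (u z) (Tbar D z₀ lam v z)‖ ≤ ((n:ℝ)+1) * Nu * min M₁ (M₂ z) := by
      refine (norm_matMul_le' _ _).trans ?_
      have hu' : ‖u z‖ ≤ Nu := norm_le_supN hb hu hz
      have hT : ‖Tbar D z₀ lam v z‖ ≤ min M₁ (M₂ z) := hTv z hz hne
      have h4 : ((n:ℝ)+1) * ‖u z‖ ≤ ((n:ℝ)+1) * Nu := by nlinarith
      exact mul_le_mul h4 hT (norm_nonneg _) (by positivity)
    rw [h1, h2, mul_comm]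
    exact mul_le_mul_of_nonneg_right h3 (inv_nonneg.2 (norm_nonneg (z - z₀)))
  have hDmeas : MeasurableSet D := hD.measurableSet
  have hnNu0 : (0:ℝ) ≤ ((n:ℝ)+1) * Nu := mul_nonneg (by positivity) hNu0
  have hΛ0 : (0:ℝ) ≤ Λ := by linarith
  have hRz : ∀ z ∈ closure D, ‖z - z₀‖ ≤ R := by
    intro z hz
    rw [← dist_eq_norm]
    exact Metric.dist_le_diam_of_mem hb.closure hz (subset_closure hz₀)
  set C₁ : ℝ := ((n:ℝ)+1) * Nu * M₁ with hC₁def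
  have hC₁0 : 0 ≤ C₁ := mul_nonneg hnNu0 hM₁0
  set C₂ : ℝ := ((n:ℝ)+1) * Nu * (τ₃ * (Λ / ‖lam‖) * Nv) * (1 + R) with hC₂def
  have hcoef0 : (0:ℝ) ≤ τ₃ * (Λ / ‖lam‖) * Nv :=
    mul_nonneg (mul_nonneg hτ₃.le (div_nonneg hΛ0 hL0.le)) hNv0
  have hC₂0 : 0 ≤ C₂ := mul_nonneg (mul_nonneg hnNu0 hcoef0) (by linarith)
  -- near-part bound
  have hae : ∀ᵐ z ∂(volume.restrict (D ∩ Metric.ball z₀ δ)),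
      z ∈ D ∩ Metric.ball z₀ δ ∧ z ≠ z₀ := by
    refine (ae_restrict_mem (hDmeas.inter measurableSet_ball)).and ?_
    refine ae_restrict_of_ae (ae_iff.2 ?_)
    have hset : {z : ℂ | ¬ z ≠ z₀} = {z₀} := by
      ext w
      simp [not_not]
    rw [hset]
    exact measure_singleton _
  have hnear : ∫⁻ z in D ∩ Metric.ball z₀ δ, (‖F z‖₊ : ℝ≥0∞) ≤
      ENNReal.ofReal (C₁ * (4 * Real.pi * δ)) := by
    have hb1 : ∫⁻ z in D ∩ Metric.ball z₀ δ, (‖F z‖₊ : ℝ≥0∞) ≤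
        ∫⁻ z in D ∩ Metric.ball z₀ δ,
          ENNReal.ofReal C₁ * ENNReal.ofReal ‖z - z₀‖⁻¹ := by
      refine lintegral_mono_ae (hae.mono ?_)
      rintro z ⟨⟨hzD, _⟩, hzne⟩
      rw [← enorm_eq_nnnorm, ← ofReal_norm, ← ENNReal.ofReal_mul hC₁0]
      apply ENNReal.ofReal_le_ofReal
      refine (hpt z (subset_closure hzD) hzne).trans ?_
      have h5 : ((n:ℝ)+1) * Nu * min M₁ (M₂ z) ≤ C₁ := by
        rw [hC₁def, mul_assoc, mul_assoc]
        exact mul_le_mul_of_nonneg_left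
          (mul_le_mul_of_nonneg_left (min_le_left _ _) hNu0) (by positivity)
      exact mul_le_mul_of_nonneg_right h5 (inv_nonneg.2 (norm_nonneg _))
    refine hb1.trans ?_
    calc ∫⁻ z in D ∩ Metric.ball z₀ δ, ENNReal.ofReal C₁ * ENNReal.ofReal ‖z - z₀‖⁻¹
        ≤ ∫⁻ z in Metric.ball z₀ δ, ENNReal.ofReal C₁ * ENNReal.ofReal ‖z - z₀‖⁻¹ :=
          lintegral_mono_set Set.inter_subset_right
      _ = ENNReal.ofReal C₁ * ∫⁻ z in Metric.ball z₀ δ, ENNReal.ofReal ‖z - z₀‖⁻¹ :=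
          lintegral_const_mul' _ _ ENNReal.ofReal_ne_top
      _ ≤ ENNReal.ofReal C₁ * ENNReal.ofReal (4 * Real.pi * δ) :=
          mul_le_mul_right (lintegral_inv_ball z₀ hδ0) _
      _ = ENNReal.ofReal (C₁ * (4 * Real.pi * δ)) := (ENNReal.ofReal_mul hC₁0).symm
  -- far-part bound
  have hfar : ∫⁻ z in D \ Metric.ball z₀ δ, (‖F z‖₊ : ℝ≥0∞) ≤
      ENNReal.ofReal (C₂ * (8 * Real.pi / δ)) := by
    have hb2 : ∫⁻ z in D \ Metric.ball z₀ δ, (‖F z‖₊ : ℝ≥0∞) ≤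
        ∫⁻ z in D \ Metric.ball z₀ δ,
          ENNReal.ofReal C₂ * ENNReal.ofReal (‖z - z₀‖⁻¹ ^ 3) := by
      apply setLIntegral_mono' (hDmeas.diff measurableSet_ball)
      rintro z ⟨hzD, hzball⟩
      have hδr : δ ≤ ‖z - z₀‖ := by
        rw [Metric.mem_ball, not_lt, dist_eq_norm] at hzball
        exact hzball
      have hr0 : 0 < ‖z - z₀‖ := lt_of_lt_of_le hδ0 hδr
      have hne : z ≠ z₀ := by
        intro h
        rw [h, sub_self, norm_zero] at hr0
        exact lt_irrefl _ hr0
      rw [← enorm_eq_nnnorm, ← ofReal_norm, ← ENNReal.ofReal_mul hC₂0]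
      apply ENNReal.ofReal_le_ofReal
      refine (hpt z (subset_closure hzD) hne).trans ?_
      have hrR : ‖z - z₀‖ ≤ R := hRz z (subset_closure hzD)
      have hkey : M₂ z * ‖z - z₀‖⁻¹ ≤
          (τ₃ * (Λ / ‖lam‖) * Nv) * (1 + R) * (‖z - z₀‖⁻¹ ^ 3) := by
        have he : (1 + ‖z - z₀‖) / ‖z - z₀‖ ^ 2 * ‖z - z₀‖⁻¹ =
            (1 + ‖z - z₀‖) * ‖z - z₀‖⁻¹ ^ 3 := by
          field_simp
        have hle : (1 + ‖z - z₀‖) / ‖z - z₀‖ ^ 2 * ‖z - z₀‖⁻¹ ≤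
            (1 + R) * ‖z - z₀‖⁻¹ ^ 3 := by
          rw [he]
          exact mul_le_mul_of_nonneg_right (by linarith) (by positivity)
        calc M₂ z * ‖z - z₀‖⁻¹
            = (τ₃ * (Λ / ‖lam‖) * Nv) *
              ((1 + ‖z - z₀‖) / ‖z - z₀‖ ^ 2 * ‖z - z₀‖⁻¹) := by rw [hM₂def]; ring
          _ ≤ (τ₃ * (Λ / ‖lam‖) * Nv) * ((1 + R) * ‖z - z₀‖⁻¹ ^ 3) :=
              mul_le_mul_of_nonneg_left hle hcoef0
          _ = (τ₃ * (Λ / ‖lam‖) * Nv) * (1 + R) * (‖z - z₀‖⁻¹ ^ 3) := by ring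
      calc ((n:ℝ)+1) * Nu * min M₁ (M₂ z) * ‖z - z₀‖⁻¹
          = ((n:ℝ)+1) * Nu * (min M₁ (M₂ z) * ‖z - z₀‖⁻¹) := by ring
        _ ≤ ((n:ℝ)+1) * Nu *
            ((τ₃ * (Λ / ‖lam‖) * Nv) * (1 + R) * (‖z - z₀‖⁻¹ ^ 3)) := by
            refine mul_le_mul_of_nonneg_left ?_ hnNu0
            exact (mul_le_mul_of_nonneg_right (min_le_right _ _)
              (inv_nonneg.2 (norm_nonneg _))).trans hkey
        _ = C₂ * ‖z - z₀‖⁻¹ ^ 3 := by rw [hC₂def]; ring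
    refine hb2.trans ?_
    calc ∫⁻ z in D \ Metric.ball z₀ δ,
          ENNReal.ofReal C₂ * ENNReal.ofReal (‖z - z₀‖⁻¹ ^ 3)
        ≤ ∫⁻ z in {z : ℂ | δ ≤ ‖z - z₀‖},
            ENNReal.ofReal C₂ * ENNReal.ofReal (‖z - z₀‖⁻¹ ^ 3) := by
          refine lintegral_mono_set ?_
          rintro z ⟨_, hzball⟩
          rw [Metric.mem_ball, not_lt, dist_eq_norm] at hzball
          exact hzball
      _ = ENNReal.ofReal C₂ *
            ∫⁻ z in {z : ℂ | δ ≤ ‖z - z₀‖}, ENNReal.ofReal (‖z - z₀‖⁻¹ ^ 3) :=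
          lintegral_const_mul' _ _ ENNReal.ofReal_ne_top
      _ ≤ ENNReal.ofReal C₂ * ENNReal.ofReal (8 * Real.pi / δ) :=
          mul_le_mul_right (lintegral_inv_cube_compl z₀ hδ0) _
      _ = ENNReal.ofReal (C₂ * (8 * Real.pi / δ)) := (ENNReal.ofReal_mul hC₂0).symm
  -- combine
  have htotal : (‖∫ z in D, F z‖₊ : ℝ≥0∞) ≤
      ENNReal.ofReal (C₁ * (4 * Real.pi * δ) + C₂ * (8 * Real.pi / δ)) := by
    calc (‖∫ z in D, F z‖₊ : ℝ≥0∞) ≤ ∫⁻ z in D, ‖F z‖₊ ∂volume :=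
        enorm_integral_le_lintegral_enorm F
      _ = ∫⁻ z in (D ∩ Metric.ball z₀ δ) ∪ (D \ Metric.ball z₀ δ), ‖F z‖₊ ∂volume := by
          rw [Set.inter_union_diff]
      _ ≤ (∫⁻ z in D ∩ Metric.ball z₀ δ, ‖F z‖₊ ∂volume) +
            ∫⁻ z in D \ Metric.ball z₀ δ, ‖F z‖₊ ∂volume := by
          rw [← lintegral_add_measure]
          exact lintegral_mono' (Measure.restrict_union_le _ _) le_rfl
      _ ≤ ENNReal.ofReal (C₁ * (4 * Real.pi * δ)) +
            ENNReal.ofReal (C₂ * (8 * Real.pi / δ)) := add_le_add hnear hfar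
      _ = ENNReal.ofReal (C₁ * (4 * Real.pi * δ) + C₂ * (8 * Real.pi / δ)) := by
          rw [← ENNReal.ofReal_add (by positivity) (by positivity)]
  -- final real arithmetic
  have hfinal : C₁ * (4 * Real.pi * δ) + C₂ * (8 * Real.pi / δ) ≤
      σ₃ * Nu * Nv * Λ / ‖lam‖ ^ ((3:ℝ)/4) := by
    have e1 : C₁ * (4 * Real.pi * δ) =
        (4 * Real.pi * ((n:ℝ)+1) * τ₂) * (Nu * Nv) * ((Real.sqrt ‖lam‖)⁻¹ * δ) := by
      rw [hC₁def, hM₁def]; ring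
    have e2 : C₂ * (8 * Real.pi / δ) =
        (8 * Real.pi * ((n:ℝ)+1) * (1+R) * τ₃) * (Nu * Nv * Λ) * (‖lam‖⁻¹ * δ⁻¹) := by
      rw [hC₂def]; ring
    rw [e1, e2, hsq, hLδ, div_eq_mul_inv, ← hXdef]
    have hc₁0 : (0:ℝ) ≤ 4 * Real.pi * ((n:ℝ)+1) * τ₂ := by positivity
    have hc₂0 : (0:ℝ) ≤ 8 * Real.pi * ((n:ℝ)+1) * (1+R) * τ₃ := by
      have : (0:ℝ) < 1 + R := by linarith
      positivity
    have hP0 : (0:ℝ) ≤ Nu * Nv * Λ * X := by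
      refine mul_nonneg (mul_nonneg (mul_nonneg hNu0 hNv0) hΛ0) hX0.le
    have h1 : (4 * Real.pi * ((n:ℝ)+1) * τ₂) * (Nu * Nv) * X ≤
        (4 * Real.pi * ((n:ℝ)+1) * τ₂) * (Nu * Nv * Λ * X) := by
      have hstep : (Nu * Nv) * X ≤ (Nu * Nv) * X * Λ :=
        le_mul_of_one_le_right (mul_nonneg (mul_nonneg hNu0 hNv0) hX0.le) hΛ1
      calc (4 * Real.pi * ((n:ℝ)+1) * τ₂) * (Nu * Nv) * X
          = (4 * Real.pi * ((n:ℝ)+1) * τ₂) * ((Nu * Nv) * X) := by ring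
        _ ≤ (4 * Real.pi * ((n:ℝ)+1) * τ₂) * ((Nu * Nv) * X * Λ) :=
            mul_le_mul_of_nonneg_left hstep hc₁0
        _ = (4 * Real.pi * ((n:ℝ)+1) * τ₂) * (Nu * Nv * Λ * X) := by ring
    have h2 : (8 * Real.pi * ((n:ℝ)+1) * (1+R) * τ₃) * (Nu * Nv * Λ) * X =
        (8 * Real.pi * ((n:ℝ)+1) * (1+R) * τ₃) * (Nu * Nv * Λ * X) := by ring
    have h3 : (4 * Real.pi * ((n:ℝ)+1) * τ₂) * (Nu * Nv * Λ * X) +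
        (8 * Real.pi * ((n:ℝ)+1) * (1+R) * τ₃) * (Nu * Nv * Λ * X) ≤
        σ₃ * (Nu * Nv * Λ * X) := by
      have hexp : σ₃ * (Nu * Nv * Λ * X) =
          (4 * Real.pi * ((n:ℝ)+1) * τ₂) * (Nu * Nv * Λ * X) +
          (8 * Real.pi * ((n:ℝ)+1) * (1+R) * τ₃) * (Nu * Nv * Λ * X) +
          (Nu * Nv * Λ * X) := by rw [hσdef]; ring
      rw [hexp]
      linarith [hP0]
    calc (4 * Real.pi * ((n:ℝ)+1) * τ₂) * (Nu * Nv) * X +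
          (8 * Real.pi * ((n:ℝ)+1) * (1+R) * τ₃) * (Nu * Nv * Λ) * X
        ≤ (4 * Real.pi * ((n:ℝ)+1) * τ₂) * (Nu * Nv * Λ * X) +
          (8 * Real.pi * ((n:ℝ)+1) * (1+R) * τ₃) * (Nu * Nv * Λ * X) := by
          rw [h2] at *
          exact add_le_add h1 le_rfl
      _ ≤ σ₃ * (Nu * Nv * Λ * X) := h3
      _ = σ₃ * Nu * Nv * Λ * X := by ring
  -- conclude
  have hσ0 : (0:ℝ) ≤ σ₃ := by
    rw [hσdef]
    have h1 : 0 ≤ 4 * Real.pi * τ₂ := by positivity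
    have h2 : 0 ≤ 8 * Real.pi * (1+R) * τ₃ := by
      nlinarith [mul_pos hπ0 hτ₃, mul_nonneg hR0 (mul_pos hπ0 hτ₃).le]
    nlinarith [mul_nonneg (show (0:ℝ) ≤ (n:ℝ)+1 by positivity) (add_nonneg h1 h2)]
  have hRHS0 : 0 ≤ σ₃ * Nu * Nv * Λ / ‖lam‖ ^ ((3:ℝ)/4) := by
    apply div_nonneg _ (Real.rpow_nonneg hL0.le _)
    exact mul_nonneg (mul_nonneg (mul_nonneg hσ0 hNu0) hNv0) hΛ0
  have hle := htotal.trans (ENNReal.ofReal_le_ofReal hfinal)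
  rw [← enorm_eq_nnnorm, ← ofReal_norm] at hle
  exact (ENNReal.ofReal_le_ofReal_iff hRHS0).1 hle
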